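/- Let (Ω, 𝒜, μ) be an atom-free σ-finite measure space, u ∈ L^1(Ω), and K ∈ (0, μ(Ω)). Then the following are equivalent: (i) μ(supp u) ≤ K; (ii) ‖u‖_1 = |u|_K; (iii) |u|_H = |u|_K for all H ∈ (K, μ(Ω)]; (iv) |u|_h = |u|_K for some h ∈ (K, μ(Ω)]. -/

import Mathlib

open MeasureTheory Set
open scoped ENNReal

/-- The largest-K-norm: `|u|_K = sup { ∫_A |u| dμ : A measurable, μ(A) ≤ K }`. -/
noncomputable def largestK {Ω : Type*} [MeasurableSpace Ω] (μ : Measure Ω) (K : ℝ≥0∞)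
    (u : Ω → ℝ) : ℝ :=
  sSup {r : ℝ | ∃ A : Set Ω, MeasurableSet A ∧ μ A ≤ K ∧ r = ∫ x in A, |u x| ∂μ}

/-- A measure is atom-free if no measurable set `A` with `μ A > 0` is an atom. -/
def AtomFree {Ω : Type*} [MeasurableSpace Ω] (μ : Measure Ω) : Prop :=
  ∀ A : Set Ω, MeasurableSet A → 0 < μ A →
    ∃ B : Set Ω, MeasurableSet B ∧ B ⊆ A ∧ 0 < μ B ∧ 0 < μ (A \ B)


section helpers
variable {Ω : Type*} [MeasurableSpace Ω] {μ : Measure Ω}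

lemma AtomFree.half (hμ : AtomFree μ) {C : Set Ω} (hC : MeasurableSet C)
    (hpos : 0 < μ C) (hfin : μ C < ∞) :
    ∃ B : Set Ω, MeasurableSet B ∧ B ⊆ C ∧ 0 < μ B ∧ μ B ≤ μ C / 2 := by
  obtain ⟨B, mB, hBC, hB, hCB⟩ := hμ C hC hpos
  rcases le_or_gt (μ B) (μ C / 2) with h | h
  · exact ⟨B, mB, hBC, hB, h⟩
  · refine ⟨C \ B, hC.diff mB, diff_subset, hCB, ?_⟩
    have hd : μ (C \ B) = μ C - μ B := measure_diff hBC mB.nullMeasurableSet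
      (ne_top_of_le_ne_top hfin.ne (measure_mono hBC))
    rw [hd]
    refine tsub_le_iff_right.mpr ?_
    calc μ C = μ C / 2 + μ C / 2 := (ENNReal.add_halves _).symm
    _ ≤ μ C / 2 + μ B := add_le_add_right h.le _

lemma AtomFree.exists_small (hμ : AtomFree μ) {C : Set Ω} (hC : MeasurableSet C)
    (hpos : 0 < μ C) (hfin : μ C < ∞) {ε : ℝ≥0∞} (hε : 0 < ε) :
    ∃ B : Set Ω, MeasurableSet B ∧ B ⊆ C ∧ 0 < μ B ∧ μ B ≤ ε := by
  have key : ∀ n : ℕ, ∃ B : Set Ω, MeasurableSet B ∧ B ⊆ C ∧ 0 < μ B ∧ μ B ≤ μ C / 2 ^ n := by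
    intro n
    induction n with
    | zero => exact ⟨C, hC, le_refl _, hpos, by simp⟩
    | succ n ih =>
        obtain ⟨B, mB, hBC, hB, hle⟩ := ih
        obtain ⟨B', mB', hB'B, hB', hle'⟩ :=
          hμ.half mB hB (lt_of_le_of_lt (measure_mono hBC) hfin)
        refine ⟨B', mB', hB'B.trans hBC, hB', hle'.trans ?_⟩
        have : μ C / 2 ^ (n + 1) = (μ C / 2 ^ n) / 2 := by
          rw [pow_succ, div_eq_mul_inv, div_eq_mul_inv, div_eq_mul_inv, mul_assoc,
            ENNReal.mul_inv (by simp) (by simp)]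
        rw [this]
        exact ENNReal.div_le_div_right hle 2
  obtain ⟨n, hn⟩ : ∃ n : ℕ, μ C / ε < 2 ^ n := by
    obtain ⟨n, hn⟩ := ENNReal.exists_nat_gt (ENNReal.div_lt_top hfin.ne hε.ne').ne
    exact ⟨n, hn.trans_le (by exact_mod_cast Nat.le_of_lt (Nat.lt_two_pow_self (n := n)))⟩
  obtain ⟨B, mB, hBC, hB, hle⟩ := key n
  refine ⟨B, mB, hBC, hB, hle.trans ?_⟩
  rw [ENNReal.div_le_iff (by positivity) (by simp)]
  have := (ENNReal.div_lt_iff (Or.inl hε.ne') (Or.inr hfin.ne)).mp hn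
  calc μ C ≤ 2 ^ n * ε := this.le
  _ = ε * 2 ^ n := mul_comm _ _

end helpers

section sierpinski
variable {Ω : Type*} [MeasurableSpace Ω] {μ : Measure Ω}

lemma AtomFree.exists_measure_eq (hμ : AtomFree μ) {C : Set Ω} (hC : MeasurableSet C)
    (hfin : μ C ≠ ∞) {v : ℝ≥0∞} (hv : v ≤ μ C) :
    ∃ B : Set Ω, MeasurableSet B ∧ B ⊆ C ∧ μ B = v := by
  have hvfin : v ≠ ∞ := ne_top_of_le_ne_top hfin hv
  set P : Set Ω → Prop := fun B => MeasurableSet B ∧ B ⊆ C ∧ μ B ≤ v with hP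
  have step : ∀ B : Set Ω, P B → ∃ B' : Set Ω, P B' ∧ B ⊆ B' ∧
      ∀ D : Set Ω, MeasurableSet D → D ⊆ C \ B → μ D ≤ v - μ B →
        μ B + μ D / 2 ≤ μ B' := by
    rintro B ⟨mB, hBC, hBv⟩
    set s : ℝ≥0∞ :=
      ⨆ (D : Set Ω) (_ : MeasurableSet D) (_ : D ⊆ C \ B) (_ : μ D ≤ v - μ B), μ D with hs
    have hDs : ∀ D : Set Ω, MeasurableSet D → D ⊆ C \ B → μ D ≤ v - μ B → μ D ≤ s := by
      intro D mD hD hDv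
      rw [hs]
      refine le_iSup_of_le D ?_
      rw [iSup_pos mD, iSup_pos hD, iSup_pos hDv]
    have hsle : s ≤ v - μ B := by
      rw [hs]
      exact iSup_le fun D => iSup_le fun _ => iSup_le fun _ => iSup_le fun h => h
    have hsfin : s < ∞ := lt_of_le_of_lt hsle (lt_of_le_of_lt tsub_le_self hvfin.lt_top)
    rcases eq_or_ne s 0 with h0 | h0
    · refine ⟨B, ⟨mB, hBC, hBv⟩, le_refl _, fun D mD hD hDv => ?_⟩
      have : μ D = 0 := le_antisymm (h0 ▸ hDs D mD hD hDv) zero_le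
      simp [this]
    · have h2 : s / 2 < ⨆ (D : Set Ω) (_ : MeasurableSet D) (_ : D ⊆ C \ B)
          (_ : μ D ≤ v - μ B), μ D :=
        lt_of_lt_of_le (ENNReal.half_lt_self h0 hsfin.ne) (le_of_eq hs)
      simp only [lt_iSup_iff] at h2
      obtain ⟨D0, mD0, hD0, hD0v, hlt⟩ := h2
      have hdisj : Disjoint B D0 := disjoint_sdiff_right.mono_right hD0
      have hmu : μ (B ∪ D0) = μ B + μ D0 := measure_union hdisj mD0
      refine ⟨B ∪ D0, ⟨mB.union mD0, union_subset hBC (hD0.trans diff_subset), ?_⟩,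
        subset_union_left, fun D mD hD hDv => ?_⟩
      · rw [hmu]
        calc μ B + μ D0 ≤ μ B + (v - μ B) := add_le_add_right hD0v _
        _ = v := add_tsub_cancel_of_le hBv
      · rw [hmu]
        refine add_le_add_right ?_ _
        calc μ D / 2 ≤ s / 2 := by gcongr; exact hDs D mD hD hDv
        _ ≤ μ D0 := hlt.le
  -- iterate
  have hPempty : P ∅ := ⟨MeasurableSet.empty, empty_subset _, by simp⟩
  let F : {B : Set Ω // P B} → {B : Set Ω // P B} :=
    fun B => ⟨(step B.1 B.2).choose, (step B.1 B.2).choose_spec.1⟩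
  let f : ℕ → {B : Set Ω // P B} := fun n => F^[n] ⟨∅, hPempty⟩
  have hf_succ : ∀ n, f (n + 1) = F (f n) := fun n => Function.iterate_succ_apply' F n _
  have hmono : ∀ n, (f n).1 ⊆ (f (n + 1)).1 := by
    intro n; rw [hf_succ]; exact (step (f n).1 (f n).2).choose_spec.2.1
  have hgain : ∀ n, ∀ D : Set Ω, MeasurableSet D → D ⊆ C \ (f n).1 →
      μ D ≤ v - μ (f n).1 → μ (f n).1 + μ D / 2 ≤ μ (f (n + 1)).1 := by
    intro n; rw [hf_succ]; exact (step (f n).1 (f n).2).choose_spec.2.2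
  have hmono' : Monotone fun n => (f n).1 := monotone_nat_of_le_succ hmono
  set Binf : Set Ω := ⋃ n, (f n).1 with hBinf
  have hsub : Binf ⊆ C := iUnion_subset fun n => (f n).2.2.1
  have hmeas : MeasurableSet Binf := MeasurableSet.iUnion fun n => (f n).2.1
  have hBsup : μ Binf = ⨆ n, μ (f n).1 := hmono'.directed_le.measure_iUnion
  have hBle : μ Binf ≤ v := hBsup ▸ iSup_le fun n => (f n).2.2.2
  refine ⟨Binf, hmeas, hsub, le_antisymm hBle (not_lt.mp fun hlt => ?_)⟩
  -- μ Binf < v leads to contradiction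
  have hdpos : 0 < μ (C \ Binf) := by
    rw [pos_iff_ne_zero]
    intro h
    have h2 : μ C ≤ μ Binf + μ (C \ Binf) := by
      conv_lhs => rw [← union_diff_cancel hsub]
      exact measure_union_le _ _
    rw [h, add_zero] at h2
    exact absurd (lt_of_le_of_lt h2 hlt) (not_lt.mpr hv)
  obtain ⟨D, mD, hD, hDpos, hDle⟩ := hμ.exists_small (hC.diff hmeas) hdpos
    (lt_of_le_of_lt (measure_mono diff_subset) hfin.lt_top) (tsub_pos_of_lt hlt)
  have hc0 : (0 : ℝ≥0∞) < μ D / 2 := ENNReal.half_pos hDpos.ne'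
  have hcfin : μ D / 2 ≠ ∞ := by
    refine (lt_of_le_of_lt (ENNReal.half_le_self) ?_).ne
    exact lt_of_le_of_lt (measure_mono (hD.trans diff_subset)) hfin.lt_top
  have key : ∀ n : ℕ, (n : ℝ≥0∞) * (μ D / 2) ≤ μ (f n).1 := by
    intro n
    induction n with
    | zero => simp
    | succ n ih =>
        have hsub' : D ⊆ C \ (f n).1 :=
          hD.trans (diff_subset_diff_right (subset_iUnion (fun n => (f n).1) n))
        have hle' : μ D ≤ v - μ (f n).1 :=
          hDle.trans (tsub_le_tsub_left (measure_mono (subset_iUnion (fun n => (f n).1) n)) v)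
        have hcast : ((n + 1 : ℕ) : ℝ≥0∞) = (n : ℝ≥0∞) + 1 := by push_cast; ring
        rw [hcast]
        calc ((n : ℝ≥0∞) + 1) * (μ D / 2) = (n : ℝ≥0∞) * (μ D / 2) + μ D / 2 := by ring
        _ ≤ μ (f n).1 + μ D / 2 := add_le_add_left ih _
        _ ≤ μ (f (n + 1)).1 := hgain n D mD hsub' hle'
  obtain ⟨n, hn⟩ := ENNReal.exists_nat_gt (ENNReal.div_lt_top hvfin hc0.ne').ne
  have : v < (n : ℝ≥0∞) * (μ D / 2) :=
    (ENNReal.div_lt_iff (Or.inl hc0.ne') (Or.inl hcfin)).mp hn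
  exact absurd ((key n).trans (f n).2.2.2) (not_le.mpr this)

end sierpinski

section largestKlemmas
open Function
variable {Ω : Type*} [MeasurableSpace Ω] {μ : Measure Ω} {u : Ω → ℝ} {K : ℝ≥0∞}

lemma largestK_set_nonempty :
    {r : ℝ | ∃ A : Set Ω, MeasurableSet A ∧ μ A ≤ K ∧ r = ∫ x in A, |u x| ∂μ}.Nonempty :=
  ⟨0, ∅, MeasurableSet.empty, by simp, by simp⟩

lemma largestK_mem_le (hu : Integrable u μ) {r : ℝ}
    (hr : r ∈ {r : ℝ | ∃ A : Set Ω, MeasurableSet A ∧ μ A ≤ K ∧ r = ∫ x in A, |u x| ∂μ}) :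
    r ≤ ∫ x, |u x| ∂μ := by
  obtain ⟨A, mA, hA, rfl⟩ := hr
  exact setIntegral_le_integral hu.abs (Filter.Eventually.of_forall fun x => abs_nonneg _)

lemma largestK_bddAbove (hu : Integrable u μ) :
    BddAbove {r : ℝ | ∃ A : Set Ω, MeasurableSet A ∧ μ A ≤ K ∧ r = ∫ x in A, |u x| ∂μ} :=
  ⟨∫ x, |u x| ∂μ, fun _ hr => largestK_mem_le hu hr⟩

lemma largestK_le_integral (hu : Integrable u μ) : largestK μ K u ≤ ∫ x, |u x| ∂μ :=
  csSup_le largestK_set_nonempty fun _ hr => largestK_mem_le hu hr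

lemma largestK_mono (hu : Integrable u μ) {H : ℝ≥0∞} (hKH : K ≤ H) :
    largestK μ K u ≤ largestK μ H u := by
  refine csSup_le_csSup (largestK_bddAbove hu) largestK_set_nonempty ?_
  rintro r ⟨A, mA, hA, rfl⟩
  exact ⟨A, mA, hA.trans hKH, rfl⟩

lemma le_largestK (hu : Integrable u μ) {A : Set Ω} (mA : MeasurableSet A) (hA : μ A ≤ K) :
    (∫ x in A, |u x| ∂μ) ≤ largestK μ K u :=
  le_csSup (largestK_bddAbove hu) ⟨A, mA, hA, rfl⟩

end largestKlemmas

/-- in an atom-free σ-finite space, for `u ∈ L¹` and `K ∈ (0, μ(Ω))`, TFAE: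
(i) `μ(supp u) ≤ K`; (ii) `‖u‖₁ = |u|_K`; (iii) `|u|_H = |u|_K` for all `H ∈ (K, μ(Ω)]`;
(iv) `|u|_h = |u|_K` for some `h ∈ (K, μ(Ω)]`. -/
theorem stmt6 {Ω : Type*} [MeasurableSpace Ω] (μ : Measure Ω) [SigmaFinite μ]
    (hμ : AtomFree μ) (u : Ω → ℝ) (hu : Integrable u μ)
    (K : ℝ≥0∞) (hK0 : 0 < K) (hK : K < μ Set.univ) :
    List.TFAE
      [μ (Function.support u) ≤ K,
       (∫ x, |u x| ∂μ) = largestK μ K u,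
       ∀ H : ℝ≥0∞, K < H → H ≤ μ Set.univ → largestK μ H u = largestK μ K u,
       ∃ h : ℝ≥0∞, K < h ∧ h ≤ μ Set.univ ∧ largestK μ h u = largestK μ K u] := by
  tfae_have 1 → 2 := by
    intro h1
    refine le_antisymm ?_ (largestK_le_integral hu)
    set A := toMeasurable μ (Function.support u) with hA
    have hsub : Function.support u ⊆ A := subset_toMeasurable _ _
    have hint : (∫ x in A, |u x| ∂μ) = ∫ x, |u x| ∂μ :=
      setIntegral_eq_integral_of_forall_compl_eq_zero fun x hx => by
        have : u x = 0 := by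
          by_contra h0
          exact hx (hsub (Function.mem_support.mpr h0))
        simp [this]
    rw [← hint]
    refine le_largestK hu (measurableSet_toMeasurable _ _) ?_
    rw [hA, measure_toMeasurable]
    exact h1
  tfae_have 2 → 3 := by
    intro h2 H hKH _
    refine le_antisymm ?_ (largestK_mono hu hKH.le)
    rw [← h2]
    exact largestK_le_integral hu
  tfae_have 3 → 4 := by
    intro h3
    exact ⟨μ Set.univ, hK, le_refl _, h3 _ hK (le_refl _)⟩
  tfae_have 4 → 1 := by
    rintro ⟨h, hKh, hhle, heq⟩
    by_contra hns
    push_neg at hns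
    -- measurable representative
    set g : Ω → ℝ := hu.1.mk u with hg
    have hgm : StronglyMeasurable g := hu.1.stronglyMeasurable_mk
    have hug : u =ᵐ[μ] g := hu.1.ae_eq_mk
    have hgint : Integrable g μ := hu.congr hug
    have habs : ∀ A : Set Ω, (∫ x in A, |u x| ∂μ) = ∫ x in A, |g x| ∂μ := fun A =>
      integral_congr_ae (ae_restrict_of_ae (hug.mono fun x hx => by
        show |u x| = |g x|
        rw [hx]))
    have hsuppg : K < μ (Function.support g) := by
      refine lt_of_lt_of_le hns ?_
      have hsub : Function.support u ⊆ Function.support g ∪ {x | u x ≠ g x} := by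
        intro x hx
        by_cases hc : u x = g x
        · exact Or.inl (Function.mem_support.mpr (hc ▸ hx))
        · exact Or.inr hc
      have hN : μ {x | u x ≠ g x} = 0 := ae_iff.mp hug
      calc μ (Function.support u) ≤ μ (Function.support g) + μ {x | u x ≠ g x} :=
            (measure_mono hsub).trans (measure_union_le _ _)
      _ = μ (Function.support g) := by rw [hN, add_zero]
    -- level sets
    set T : ℕ → Set Ω := fun n => {x | 1 / (n + 1 : ℝ) ≤ |g x|} with hT
    have hTmeas : ∀ n, MeasurableSet (T n) := fun n =>
      hgm.measurable.abs measurableSet_Ici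
    have hTmono : Monotone T := by
      intro m n hmn x hx
      have hx' : 1 / (m + 1 : ℝ) ≤ |g x| := hx
      have hle : 1 / (n + 1 : ℝ) ≤ 1 / (m + 1 : ℝ) := by
        rw [div_le_div_iff₀ (by positivity) (by positivity)]
        have : (m : ℝ) ≤ n := Nat.cast_le.mpr hmn
        nlinarith
      exact hle.trans hx'
    have hTunion : Function.support g = ⋃ n, T n := by
      ext x
      simp only [Function.mem_support, mem_iUnion, hT, mem_setOf_eq]
      constructor
      · intro hx
        obtain ⟨n, hn⟩ := exists_nat_one_div_lt (abs_pos.mpr hx)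
        exact ⟨n, hn.le⟩
      · rintro ⟨n, hn⟩ hx0
        rw [hx0, abs_zero] at hn
        have : (0 : ℝ) < 1 / (n + 1 : ℝ) := by positivity
        linarith
    have hiSup : μ (Function.support g) = ⨆ n, μ (T n) := by
      rw [hTunion]
      exact hTmono.directed_le.measure_iUnion
    obtain ⟨n, hn⟩ : ∃ n, K < μ (T n) := by
      rw [hiSup] at hsuppg
      exact lt_iSup_iff.mp hsuppg
    set t : ℝ := 1 / (n + 1 : ℝ) with ht
    have htpos : 0 < t := by positivity
    have hTfin : μ (T n) < ∞ := hgint.abs.measure_ge_lt_top htpos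
    -- choose δ
    set δ : ℝ≥0∞ := min (h - K) (μ (T n) - K) with hδ
    have hKtop : K ≠ ∞ := hK.ne_top
    have hδpos : 0 < δ := lt_min (tsub_pos_of_lt hKh) (tsub_pos_of_lt hn)
    have hδfin : δ < ∞ :=
      lt_of_le_of_lt (min_le_right _ _) (lt_of_le_of_lt tsub_le_self hTfin)
    have hKδ : K + δ ≤ h := by
      calc K + δ ≤ K + (h - K) := add_le_add_right (min_le_left _ _) _
      _ = h := add_tsub_cancel_of_le hKh.le
    -- key estimate
    have key : ∀ r ∈ {r : ℝ | ∃ A : Set Ω, MeasurableSet A ∧ μ A ≤ K ∧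
        r = ∫ x in A, |u x| ∂μ}, r + t * δ.toReal ≤ largestK μ h u := by
      rintro r ⟨A, mA, hA, rfl⟩
      have hCle : δ ≤ μ (T n \ A) := by
        calc δ ≤ μ (T n) - K := min_le_right _ _
        _ ≤ μ (T n) - μ A := tsub_le_tsub_left hA _
        _ ≤ μ (T n \ A) := le_measure_diff
      have hCfin : μ (T n \ A) ≠ ∞ :=
        (lt_of_le_of_lt (measure_mono diff_subset) hTfin).ne
      obtain ⟨B, mB, hBsub, hBeq⟩ :=
        hμ.exists_measure_eq ((hTmeas n).diff mA) hCfin hCle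
      have hdisj : Disjoint A B :=
        disjoint_sdiff_right.mono_right hBsub
      have hBfin : μ B ≠ ∞ := (hBeq ▸ hδfin).ne
      have hAB : μ (A ∪ B) ≤ h := by
        calc μ (A ∪ B) ≤ μ A + μ B := measure_union_le _ _
        _ ≤ K + δ := by rw [hBeq]; exact add_le_add_left hA _
        _ ≤ h := hKδ
      have hsplit : (∫ x in A ∪ B, |u x| ∂μ)
          = (∫ x in A, |u x| ∂μ) + ∫ x in B, |u x| ∂μ :=
        setIntegral_union hdisj mB hu.abs.integrableOn hu.abs.integrableOn
      have hBint : t * δ.toReal ≤ ∫ x in B, |u x| ∂μ := by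
        rw [habs B]
        have hconst : (∫ _ in B, t ∂μ) = (μ B).toReal * t := by
          rw [setIntegral_const, smul_eq_mul, measureReal_def]
        have hmono2 : (∫ _ in B, t ∂μ) ≤ ∫ x in B, |g x| ∂μ := by
          refine setIntegral_mono_on (integrableOn_const hBfin)
            hgint.abs.integrableOn mB ?_
          intro x hx
          exact (hBsub hx).1
        rw [hconst, hBeq] at hmono2
        calc t * δ.toReal = δ.toReal * t := mul_comm _ _
        _ ≤ ∫ x in B, |g x| ∂μ := hmono2
      calc (∫ x in A, |u x| ∂μ) + t * δ.toReal
          ≤ (∫ x in A, |u x| ∂μ) + ∫ x in B, |u x| ∂μ := by linarith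
      _ = ∫ x in A ∪ B, |u x| ∂μ := hsplit.symm
      _ ≤ largestK μ h u := le_largestK hu (mA.union mB) hAB
    have hfinal : largestK μ K u + t * δ.toReal ≤ largestK μ h u := by
      have : largestK μ K u ≤ largestK μ h u - t * δ.toReal := by
        refine csSup_le largestK_set_nonempty fun r hr => ?_
        linarith [key r hr]
      linarith
    have htδ : 0 < t * δ.toReal :=
      mul_pos htpos (ENNReal.toReal_pos hδpos.ne' hδfin.ne)
    rw [heq] at hfinal
    linarith
  tfae_finish
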